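/- Suppose the SMDP data (S, A, p, t) has the following structural property: for every r̄ ∈ ℝ and every q ∈ ℝ^{S×A} satisfying q(s,a) = −t(s,a)·r̄ + Σ_{s'} p(s,a,s')·max_{a'} q(s',a') for all (s,a), one has r̄ = 0 and q is a constant vector (q = c·𝟏 for some c ∈ ℝ). Let f_∞ : ℝ^{S×A} → ℝ satisfy f_∞(0) = 0 and be SISTr at the origin. Then the only q ∈ ℝ^{S×A} satisfying q(s,a) = −t(s,a)·f_∞(q) + Σ_{s'} p(s,a,s')·max_{a'} q(s',a') for all (s,a) is q = 0. -/
import Mathlib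


theorem stmt2 (S A : Type*) [Fintype S] [Fintype A] [Nonempty S] [Nonempty A]
    (p : S × A × S → ℝ) (t : S × A → ℝ)
    (hp : ∀ s a s', 0 ≤ p (s, a, s'))
    (hp1 : ∀ s a, ∑ s' : S, p (s, a, s') = 1)
    (ht : ∀ s a, 0 < t (s, a))
    -- structural property: solutions of the zero-reward AOE are `r̄ = 0` and constant `q`
    (hstruct : ∀ (rbar : ℝ) (q : S × A → ℝ),
      (∀ s a, q (s, a) = - t (s, a) * rbar +
        ∑ s' : S, p (s, a, s') *
          (Finset.univ.sup' Finset.univ_nonempty fun a' : A => q (s', a'))) →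
      rbar = 0 ∧ ∃ c : ℝ, q = fun _ => c)
    (finf : (S × A → ℝ) → ℝ) (hf0 : finf 0 = 0)
    -- `finf` is SISTr at the origin
    (hmono : StrictMono (fun c : ℝ => finf ((0 : S × A → ℝ) + c • (1 : S × A → ℝ))))
    (hsurj : Function.Surjective
      (fun c : ℝ => finf ((0 : S × A → ℝ) + c • (1 : S × A → ℝ)))) :
    ∀ q : S × A → ℝ,
      (∀ s a, q (s, a) = - t (s, a) * finf q +
        ∑ s' : S, p (s, a, s') *
          (Finset.univ.sup' Finset.univ_nonempty fun a' : A => q (s', a'))) →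
      q = 0 := by
  intro q hq
  obtain ⟨hr, c, hc⟩ := hstruct (finf q) q hq
  have hq1 : q = (0 : S × A → ℝ) + c • (1 : S × A → ℝ) := by
    funext x; simp [hc]
  have h0 : (0 : S × A → ℝ) + (0 : ℝ) • (1 : S × A → ℝ) = 0 := by
    funext x; simp
  have : finf ((0 : S × A → ℝ) + c • (1 : S × A → ℝ)) =
      finf ((0 : S × A → ℝ) + (0 : ℝ) • (1 : S × A → ℝ)) := by
    rw [h0, hf0, ← hq1, hr]
  have hc0 : c = 0 := hmono.injective this
  rw [hq1, hc0, h0]
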